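/- For any pair of n-species local states (α, β), the total outgoing transition rate equals g(β): Σ_{(γ,δ) : (α,β)>(γ,δ)} w_{min(γ∖α)} = w_1 β^1 + ⋯ + w_n β^n = g(β). Consequently, every column of the local Markov matrix h sums to zero: Σ_{γ,δ} h^{γ,δ}_{α,β} = 0. -/

import Mathlib

open scoped BigOperators

namespace ITAZRP

/-- Cyclic successor on `Fin L` (site `i+1` on the periodic chain `ℤ_L`). -/
def cyc {L : ℕ} (i : Fin L) : Fin L := ⟨(i.val + 1) % L, Nat.mod_lt _ i.pos⟩

/-- Cyclic subtraction of a natural number on `Fin L`. -/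
def csub {L : ℕ} (s : Fin L) (d : ℕ) : Fin L :=
  ⟨(s.val + (L - d % L)) % L, Nat.mod_lt _ s.pos⟩

/-- Multiplicity representation → multiset representation. -/
def toMul {m : ℕ} (α : Fin m → ℕ) : Multiset (Fin m) :=
  ∑ a : Fin m, Multiset.replicate (α a) a

/-- Multiset representation → multiplicity representation. -/
def ofMul {m : ℕ} (s : Multiset (Fin m)) : Fin m → ℕ := fun a => s.count a

/-- The relation `(α,β) > (γ,δ)`: there is `k ∈ [1,r]` with
`γ = α ∪ {β_k,…,β_r}` and `δ = (β_1,…,β_{k-1})`; equivalently `β` splits as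
`δ + t` with `t ≠ 0`, every element of `δ` below every element of `t`,
and `γ = α + t`. -/
def GtRel {m : ℕ} (α β γ δ : Multiset (Fin m)) : Prop :=
  ∃ t : Multiset (Fin m), t ≠ 0 ∧ β = δ + t ∧ γ = α + t ∧ ∀ x ∈ δ, ∀ y ∈ t, x ≤ y

theorem GtRel.sub_nonempty {m : ℕ} {α β γ δ : Multiset (Fin m)} (h : GtRel α β γ δ) :
    (γ - α).toFinset.Nonempty := by
  obtain ⟨t, ht, -, hγ, -⟩ := h
  rw [hγ, add_tsub_cancel_left]
  exact Multiset.toFinset_nonempty.mpr ht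

/-- Minimum of a nonempty multiset over `Fin m`. -/
def msetMin {m : ℕ} (t : Multiset (Fin m)) (h : t.toFinset.Nonempty) : Fin m :=
  t.toFinset.min' h

/-- `g(β) = w_1 β^1 + ⋯ + w_n β^n`. -/
noncomputable def gVal {m : ℕ} (w : Fin m → ℝ) (β : Multiset (Fin m)) : ℝ := (β.map w).sum

open Classical in
/-- The transition rate `w_{min(γ∖α)}` when `(α,β) > (γ,δ)`, and `0` otherwise. -/
noncomputable def wRateM {m : ℕ} (w : Fin m → ℝ) (α β γ δ : Multiset (Fin m)) : ℝ :=
  if h : GtRel α β γ δ then w (msetMin (γ - α) h.sub_nonempty) else 0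

open Classical in
/-- The local Markov matrix entry `h^{γ,δ}_{α,β}` in multiset representation. -/
noncomputable def hEntM {m : ℕ} (w : Fin m → ℝ) (α β γ δ : Multiset (Fin m)) : ℝ :=
  if h : GtRel α β γ δ then w (msetMin (γ - α) h.sub_nonempty)
  else if α = γ ∧ β = δ then -(gVal w β) else 0

/-- The local Markov matrix entry `h^{γ,δ}_{α,β}` in multiplicity representation. -/
noncomputable def hEnt {m : ℕ} (w : Fin m → ℝ) (α β γ δ : Fin m → ℕ) : ℝ :=
  hEntM w (toMul α) (toMul β) (toMul γ) (toMul δ)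


/-- Product of two (possibly infinite) matrices, entries summed by `tsum`. -/
noncomputable def matMul {ι : Type*} (X Y : ι → ι → ℝ) : ι → ι → ℝ :=
  fun s t => ∑' u, X s u * Y u t

/-- Trace of a (possibly infinite) matrix, summed by `tsum`. -/
noncomputable def matTrace {ι : Type*} (X : ι → ι → ℝ) : ℝ := ∑' s, X s s

open Classical in
/-- Ordered product `f 0 * f 1 * ⋯ * f (L-1)` of matrices. -/
noncomputable def matProd {ι : Type*} : (L : ℕ) → (Fin L → (ι → ι → ℝ)) → (ι → ι → ℝ)
  | 0, _ => fun s t => if s = t then 1 else 0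
  | (L + 1), f => matMul (f 0) (matProd L fun i => f i.succ)

/-- The diagonal part `Σ_{r=1}^{n-1} θ(α^{r+1} = ⋯ = α^n = 0) ρ_r K_r + ρ_n K_n`
of the operator `A`, evaluated at the Fock basis vector labelled `u`;
here `ρ` is the rate attached to each `K_r`. -/
noncomputable def Dval (Nm : ℕ) (ρ : Fin (Nm + 1) → ℝ) (α : Fin (Nm + 1) → ℕ)
    (u : Fin Nm → ℕ) : ℝ :=
  (∑ r : Fin Nm,
      if (∀ b : Fin (Nm + 1), (r : ℕ) < (b : ℕ) → α b = 0) ∧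
          (∀ j : Fin Nm, j < r → u j = 0) ∧ u r ≠ 0
      then ρ r.castSucc else 0)
    + (if ∀ j, u j = 0 then ρ (Fin.last Nm) else 0)

open Classical in
/-- Matrix entries of `P_+(μ) (Σ_r θ(⋯) ρ_r K_r + ρ_n K_n) P_-(ᾱ)`
on `F^{⊗ Nm}` (where `n = Nm + 1`). -/
noncomputable def AentGen (Nm : ℕ) (ρ : Fin (Nm + 1) → ℝ) (μ : Fin Nm → ℕ)
    (α : Fin (Nm + 1) → ℕ) : (Fin Nm → ℕ) → (Fin Nm → ℕ) → ℝ :=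
  fun s t =>
    if (∀ j, μ j ≤ s j) ∧ (∀ j, t j = s j - μ j + α j.castSucc)
    then Dval Nm ρ α (fun j => s j - μ j) else 0

/-- Matrix entries of the operator `A^{(n)}_{μ,α}` with `n = Nm + 1`. -/
noncomputable def Aent (Nm : ℕ) (w : Fin (Nm + 1) → ℝ) (μ : Fin Nm → ℕ)
    (α : Fin (Nm + 1) → ℕ) : (Fin Nm → ℕ) → (Fin Nm → ℕ) → ℝ :=
  AentGen Nm w μ α

/-- Matrix entries of the operator `Â^{(n)}_{μ,α}` with `n = Nm + 1`:
the rate `w_r` is replaced by `w_r (w_r + g(α))`. -/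
noncomputable def AhatEnt (Nm : ℕ) (w : Fin (Nm + 1) → ℝ) (μ : Fin Nm → ℕ)
    (α : Fin (Nm + 1) → ℕ) : (Fin Nm → ℕ) → (Fin Nm → ℕ) → ℝ :=
  AentGen Nm (fun r => w r * (w r + gVal w (toMul α))) μ α

/-- Index set of the Fock space `F^{⊗ n(n-1)/2}` (`n = N+1`), split into blocks of
sizes `1, 2, …, N`: block `a` carries the factor `F^{⊗ (a+1)}` on which
`A^{(a+2)}` acts. -/
abbrev BigIdx (N : ℕ) := (a : Fin N) → (Fin (a.val + 1) → ℕ)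

/-- Extend a tuple `(μ^{(1)}, …, μ^{(N)})` by `μ^{(N+1)} := σ`. -/
def mextend (N : ℕ) (μ : BigIdx N) (σ : Fin (N + 1) → ℕ) :
    (k : Fin (N + 1)) → Fin (k.val + 1) → ℕ :=
  fun k j => if h : (k : ℕ) < N then μ ⟨k, h⟩ j
    else σ (Fin.castLE (Nat.succ_le_of_lt k.isLt) j)

/-- Matrix entries of
`X_σ = Σ_{μ^{(1)},…,μ^{(N)}} A^{(2)}_{μ^{(1)},μ^{(2)}} ⊗ ⋯ ⊗ A^{(N+1)}_{μ^{(N)},σ}`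
acting on `F^{⊗ N(N+1)/2}` (with `n = N + 1` species). -/
noncomputable def Xent (N : ℕ) (w : Fin (N + 1) → ℝ) (σ : Fin (N + 1) → ℕ) :
    BigIdx N → BigIdx N → ℝ :=
  fun s t => ∑' μ : BigIdx N, ∏ a : Fin N,
    Aent (a.val + 1) (fun b => w (Fin.castLE (Nat.succ_le_succ a.isLt) b))
      (mextend N μ σ ⟨a.val, Nat.lt_succ_of_lt a.isLt⟩)
      (mextend N μ σ ⟨a.val + 1, Nat.succ_lt_succ a.isLt⟩)
      (s a) (t a)

/-- A configuration of the `m`-species process on the periodic chain `ℤ_L`. -/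
abbrev Config (L m : ℕ) := Fin L → (Fin m → ℕ)

/-- Membership in the sector `S(mm)`: the total multiplicity of each species is `mm`. -/
def inSector {L m : ℕ} (σ : Config L m) (mm : Fin m → ℕ) : Prop :=
  ∀ a, (∑ i, σ i a) = mm a

/-- Replace the local states at the cyclically adjacent sites `i, i+1` by `a, b`. -/
def update2 {L m : ℕ} (σ : Config L m) (i : Fin L) (a b : Fin m → ℕ) : Config L m :=
  fun j => if j = i then a else if j = cyc i then b else σ j

/-- The left hand side
`Σ_{i ∈ ℤ_L} Σ_{σ'_i, σ'_{i+1}} h^{σ_i,σ_{i+1}}_{σ'_i,σ'_{i+1}} P(σ_1,…,σ'_i,σ'_{i+1},…,σ_L)`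
of the stationarity equation. -/
noncomputable def stationaryTerm {L m : ℕ} (w : Fin m → ℝ) (P : Config L m → ℝ)
    (σ : Config L m) : ℝ :=
  ∑ i : Fin L, ∑' p : (Fin m → ℕ) × (Fin m → ℕ),
    hEnt w p.1 p.2 (σ i) (σ (cyc i)) * P (update2 σ i p.1 p.2)

/-- `P` satisfies the stationarity (steady state) equation on the sector `S(mm)`. -/
def IsStationary {L m : ℕ} (w : Fin m → ℝ) (P : Config L m → ℝ) (mm : Fin m → ℕ) : Prop :=
  ∀ σ : Config L m, inSector σ mm → stationaryTerm w P σ = 0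

/-- `ℓ_a = m_1 + ⋯ + m_a`. -/
def ell {m : ℕ} (mm : Fin m → ℕ) (a : Fin m) : ℕ :=
  ∑ b : Fin m, if b ≤ a then mm b else 0

/-- The family `Q` of polynomials in `w_1,…,w_m` is *the* steady state probability of the
`m`-species iTAZRP in the sector `S(mm)`: it satisfies the stationarity equation for all
positive rates, is homogeneous of degree `(m-1)(L-1)` with coefficients in `ℤ_{≥0}`, and its
values at `w_1 = ⋯ = w_m = 1` sum to `Π_a C(L-1+ℓ_a, ℓ_a)` over the sector. -/
noncomputable def IsSteadyState (L m : ℕ) (mm : Fin m → ℕ)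
    (Q : Config L m → MvPolynomial (Fin m) ℝ) : Prop :=
  (∀ w : Fin m → ℝ, (∀ a, 0 < w a) →
      IsStationary w (fun τ => MvPolynomial.eval w (Q τ)) mm)
  ∧ (∀ τ : Config L m, inSector τ mm → (Q τ).IsHomogeneous ((m - 1) * (L - 1)))
  ∧ (∀ τ : Config L m, inSector τ mm → ∀ d : (Fin m) →₀ ℕ, ∃ c : ℕ, (Q τ).coeff d = (c : ℝ))
  ∧ (∑' τ : {τ : Config L m // inSector τ mm},
        MvPolynomial.eval (fun _ => (1 : ℝ)) (Q τ.val))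
      = ∏ a : Fin m, ((L - 1 + ell mm a).choose (ell mm a) : ℝ)

/-- The vector `h_{i,i+1} |σ⟩ = Σ_{γ,δ} h^{γ,δ}_{σ_i,σ_{i+1}} |…,γ,δ,…⟩`, the target pairs
`(γ,δ)` being enumerated by the splitting position `k` of the sorted word of `σ_{i+1}`. -/
noncomputable def hLocAction {L : ℕ} (N : ℕ) (w : Fin (N + 1) → ℝ)
    (σ : Config L (N + 1)) (i : Fin L) : (Config L (N + 1)) →₀ ℝ :=
  (∑ k ∈ Finset.range ((toMul (σ (cyc i))).sort (· ≤ ·)).length,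
      w (((toMul (σ (cyc i))).sort (· ≤ ·)).getD k 0) •
        Finsupp.single
          (update2 σ i
            (ofMul (toMul (σ i) + ↑(((toMul (σ (cyc i))).sort (· ≤ ·)).drop k)))
            (ofMul (↑(((toMul (σ (cyc i))).sort (· ≤ ·)).take k))))
          (1 : ℝ))
    - gVal w (toMul (σ (cyc i))) • Finsupp.single σ (1 : ℝ)

/-- The Markov matrix `H = Σ_{i ∈ ℤ_L} h_{i,i+1}` as a linear endomorphism of the
free vector space on the set of configurations. -/
noncomputable def Hop (N L : ℕ) (w : Fin (N + 1) → ℝ) :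
    ((Config L (N + 1)) →₀ ℝ) →ₗ[ℝ] ((Config L (N + 1)) →₀ ℝ) :=
  Finsupp.linearCombination ℝ (fun σ => ∑ i : Fin L, hLocAction N w σ i)

/-- The cyclic shift `C : |σ_1,…,σ_L⟩ ↦ |σ_L,σ_1,…,σ_{L-1}⟩`. -/
noncomputable def Cop (N L : ℕ) :
    ((Config L (N + 1)) →₀ ℝ) →ₗ[ℝ] ((Config L (N + 1)) →₀ ℝ) :=
  Finsupp.lmapDomain ℝ ℝ (fun σ : Config L (N + 1) => fun j => σ (csub j 1))

/-- The state of the pairing procedure of the TAZRP embedding rule: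
`u j` = number of yet uncolored dots in bottom box `j`;
`done j` = colors of the colored dots in bottom box `j`;
`cross i` = colors of the H-lines crossing the border between bottom boxes `i` and `i+1`. -/
structure PairState (L n : ℕ) where
  u : Fin L → ℕ
  done : Fin L → Multiset (Fin n)
  cross : Fin L → Multiset (Fin n)

open Classical in
/-- Process one species-`c` particle sitting in top box `p`: its H-line starts at the
left adjacent bottom box `p-1` and proceeds left (cyclically) until it first meets a box
with an uncolored dot, which it colors; the borders it crosses are recorded. -/
noncomputable def step {L n : ℕ} (st : PairState L n) (c : Fin n) (p : Fin L) : PairState L n :=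
  match (List.range L).find? (fun d => decide (0 < st.u (csub (csub p 1) d))) with
  | none => st
  | some d =>
      { u := Function.update st.u (csub (csub p 1) d) (st.u (csub (csub p 1) d) - 1)
        done := Function.update st.done (csub (csub p 1) d) (c ::ₘ st.done (csub (csub p 1) d))
        cross := fun j =>
          if ∃ e ∈ Finset.Icc 1 d, j = csub (csub p 1) e then c ::ₘ st.cross j
          else st.cross j }

/-- The particles of the top row, listed species by species in increasing order. -/
def particleList {L : ℕ} (n : ℕ) (σ : Fin L → Multiset (Fin n)) : List (Fin n × Fin L) :=
  (List.finRange n).flatMap fun b =>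
    (List.finRange L).flatMap fun i => List.replicate ((σ i).count b) (b, i)

/-- Run the whole pairing procedure of the embedding rule for the multiline row `x`
(the dots) below the configuration `σ` (the particles). -/
noncomputable def runPairing {L n : ℕ} (x : Fin L → ℕ) (σ : Fin L → Multiset (Fin n)) : PairState L n :=
  (particleList n σ).foldl (fun st bp => step st bp.1 bp.2) ⟨x, fun _ => 0, fun _ => 0⟩

/-- The TAZRP embedding rule `Φ_x(σ)`: colored dots keep their color, remaining
uncolored dots become particles of species `a`. -/
noncomputable def PhiAt {L n : ℕ} (a : Fin n) (x : Fin L → ℕ) (σ : Fin L → Multiset (Fin n)) :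
    Fin L → Multiset (Fin n) :=
  fun j => (runPairing x σ).done j + Multiset.replicate ((runPairing x σ).u j) a

/-- The factor `η_i`: `w_a` if no H-line crosses the border between bottom boxes `i` and
`i+1`, and `w_{min(col_i)}` otherwise. -/
noncomputable def etaAt {L n : ℕ} (a : Fin n) (w : Fin n → ℝ) (x : Fin L → ℕ)
    (σ : Fin L → Multiset (Fin n)) (i : Fin L) : ℝ :=
  if h : (runPairing x σ).cross i = 0 then w a
  else w (msetMin ((runPairing x σ).cross i) (Multiset.toFinset_nonempty.mpr h))

/-- The product `η_1 ⋯ η_L`. -/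
noncomputable def etaProd {L n : ℕ} (a : Fin n) (w : Fin n → ℝ) (x : Fin L → ℕ)
    (σ : Fin L → Multiset (Fin n)) : ℝ :=
  ∏ i : Fin L, etaAt a w x σ i

/-- `ϖ_x(σ) = w_a^{-1} η_1 ⋯ η_L`. -/
noncomputable def varpiAt {L n : ℕ} (a : Fin n) (w : Fin n → ℝ) (x : Fin L → ℕ)
    (σ : Fin L → Multiset (Fin n)) : ℝ :=
  (w a)⁻¹ * etaProd a w x σ

/-- The tower `σ^1, σ^2, …` of configurations: `σ^1` is the 1-species configuration given
by `x^1`, and `σ^{a} = Φ_{x^{a}}(σ^{a-1})` (indices `0,…,N` in Lean). -/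
noncomputable def sigmaSeq {L : ℕ} (N : ℕ) (x : Fin (N + 1) → Fin L → ℕ) :
    ℕ → (Fin L → Multiset (Fin (N + 1)))
  | 0 => fun i => Multiset.replicate (x 0 i) (0 : Fin (N + 1))
  | (k + 1) =>
      if h : k + 1 < N + 1 then
        PhiAt (⟨k + 1, h⟩ : Fin (N + 1)) (x ⟨k + 1, h⟩) (sigmaSeq N x k)
      else sigmaSeq N x k

/-- The projection `π : B(m) → S(m)`, `π(x) = σ^n`. -/
noncomputable def piMap {L : ℕ} (N : ℕ) (x : Fin (N + 1) → Fin L → ℕ) : Config L (N + 1) :=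
  fun i => ofMul (sigmaSeq N x N i)

/-- The weight `W(x) = Π_{a=2}^n ϖ_{x^a}(σ^{a-1})`. -/
noncomputable def Wweight {L : ℕ} (N : ℕ) (w : Fin (N + 1) → ℝ)
    (x : Fin (N + 1) → Fin L → ℕ) : ℝ :=
  ∏ r : Fin N, varpiAt r.succ w (x r.succ) (sigmaSeq N x r.val)

open Classical in
/-- The local Markov matrix entry `h^{γ,δ}_{α,β}` for the single species (`n = 1`) TAZRP,
where a local state is just the number of particles occupying the site. -/
noncomputable def h1 (w1 : ℝ) (α β γ δ : ℕ) : ℝ :=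
  if ∃ k, 1 ≤ k ∧ k ≤ β ∧ γ = α + β - k + 1 ∧ δ = k - 1 then w1
  else if α = γ ∧ β = δ then -(w1 * β) else 0



/-- Auxiliary lemmas for Statement 7. -/
lemma ofMul_toMul' {m : ℕ} (α : Fin m → ℕ) : ofMul (toMul α) = α := by
  funext a
  simp [ofMul, toMul, Multiset.count_sum', Multiset.count_replicate]

lemma toMul_ofMul' {m : ℕ} (s : Multiset (Fin m)) : toMul (ofMul s) = s := by
  unfold toMul ofMul
  simp_rw [← Multiset.nsmul_singleton]
  conv_rhs => rw [← Multiset.toFinset_sum_count_nsmul_eq s]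
  rw [Finset.sum_subset (Finset.subset_univ s.toFinset)]
  intro x _ hx
  simp [Multiset.count_eq_zero_of_notMem, Multiset.mem_toFinset.not.mp hx]

lemma toMul_injective' {m : ℕ} : Function.Injective (toMul (m := m)) :=
  Function.LeftInverse.injective ofMul_toMul'

lemma gtRel_iff' {m : ℕ} (A B γ δ : Multiset (Fin m)) :
    GtRel A B γ δ ↔ ∃ k, ∃ _ : k < (B.sort (· ≤ ·)).length,
      δ = ↑((B.sort (· ≤ ·)).take k) ∧ γ = A + ↑((B.sort (· ≤ ·)).drop k) := by
  set l := B.sort (· ≤ ·) with hl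
  constructor
  · rintro ⟨t, ht, hβ, hγ, hle⟩
    set ld := δ.sort (· ≤ ·)
    set lt := t.sort (· ≤ ·)
    have hperm : List.Perm (ld ++ lt) l := by
      rw [← Multiset.coe_eq_coe]
      rw [← Multiset.coe_add, Multiset.sort_eq, Multiset.sort_eq, Multiset.sort_eq, ← hβ]
    have hsorted : (ld ++ lt).Pairwise (· ≤ ·) := by
      refine List.pairwise_append.mpr ⟨Multiset.pairwise_sort _ _, Multiset.pairwise_sort _ _,
        fun x hx y hy => ?_⟩
      exact hle x ((Multiset.mem_sort _).mp hx) y ((Multiset.mem_sort _).mp hy)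
    have heq : ld ++ lt = l :=
      List.Perm.eq_of_pairwise' hsorted (Multiset.pairwise_sort _ _) hperm
    refine ⟨ld.length, ?_, ?_, ?_⟩
    · rw [← heq, List.length_append]
      have : 0 < lt.length := by
        rw [Multiset.length_sort]
        exact Multiset.card_pos.mpr ht
      omega
    · rw [← heq, List.take_left]
      exact (Multiset.sort_eq _ _).symm
    · rw [← heq, List.drop_left, Multiset.sort_eq]
      exact hγ
  · rintro ⟨k, hk, hδ, hγ⟩
    refine ⟨↑(l.drop k), ?_, ?_, hγ, ?_⟩
    · simp only [ne_eq, Multiset.coe_eq_zero]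
      intro h
      rw [List.drop_eq_nil_iff] at h
      omega
    · rw [hδ, Multiset.coe_add, List.take_append_drop, Multiset.sort_eq]
    · intro x hx y hy
      rw [hδ, Multiset.mem_coe] at hx
      rw [Multiset.mem_coe] at hy
      have hs : l.Pairwise (· ≤ ·) := Multiset.pairwise_sort _ _
      rw [← List.take_append_drop k l] at hs
      exact (List.pairwise_append.mp hs).2.2 x hx y hy

lemma msetMin_congr' {m : ℕ} {s t : Multiset (Fin m)} (e : s = t) (hs : s.toFinset.Nonempty) :
    msetMin s hs = msetMin t (e ▸ hs) := by subst e; rfl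

lemma msetMin_drop' {m : ℕ} (l : List (Fin m)) (hs : l.Pairwise (· ≤ ·)) (k : ℕ)
    (hk : k < l.length) (h : ((↑(l.drop k) : Multiset (Fin m))).toFinset.Nonempty) :
    msetMin ↑(l.drop k) h = l.get ⟨k, hk⟩ := by
  have hmem : l.get ⟨k, hk⟩ ∈ l.drop k := by
    simp only [List.get_eq_getElem]
    rw [List.drop_eq_getElem_cons hk]
    exact List.mem_cons_self
  apply le_antisymm
  · exact Finset.min'_le _ _ (Multiset.mem_toFinset.mpr (Multiset.mem_coe.mpr hmem))
  · apply Finset.le_min'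
    intro y hy
    rw [Multiset.mem_toFinset, Multiset.mem_coe, List.drop_eq_getElem_cons hk] at hy
    rcases List.mem_cons.mp hy with h1 | h2
    · simp [List.get_eq_getElem, h1.symm]
    · have hd : (l.drop k).Pairwise (· ≤ ·) := hs.sublist (List.drop_sublist _ _)
      rw [List.drop_eq_getElem_cons hk] at hd
      exact List.rel_of_pairwise_cons hd h2

lemma wRateM_apply' {m : ℕ} (w : Fin m → ℝ) (A B : Multiset (Fin m)) (k : ℕ)
    (hk : k < (B.sort (· ≤ ·)).length) :
    wRateM w A B (A + ↑((B.sort (· ≤ ·)).drop k)) ↑((B.sort (· ≤ ·)).take k)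
      = w ((B.sort (· ≤ ·)).get ⟨k, hk⟩) := by
  have hGt : GtRel A B (A + ↑((B.sort (· ≤ ·)).drop k)) ↑((B.sort (· ≤ ·)).take k) :=
    (gtRel_iff' A B _ _).mpr ⟨k, hk, rfl, rfl⟩
  rw [wRateM, dif_pos hGt]
  have e : (A + (↑((B.sort (· ≤ ·)).drop k) : Multiset (Fin m))) - A
      = ↑((B.sort (· ≤ ·)).drop k) := add_tsub_cancel_left _ _
  rw [msetMin_congr' e, msetMin_drop' _ (Multiset.pairwise_sort _ _) k hk]

lemma hEntM_split' {m : ℕ} (w : Fin m → ℝ) (A B γ δ : Multiset (Fin m)) :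
    hEntM w A B γ δ = wRateM w A B γ δ + (if A = γ ∧ B = δ then -(gVal w B) else 0) := by
  rw [hEntM, wRateM]
  by_cases h : GtRel A B γ δ
  · rw [dif_pos h, dif_pos h, if_neg, add_zero]
    rintro ⟨rfl, rfl⟩
    obtain ⟨t, ht, hβ', -, -⟩ := h
    exact ht (by simpa using hβ'.symm)
  · rw [dif_neg h, dif_neg h, zero_add]

/-- For any pair of `n`-species local states `(α, β)`, the total outgoing
rate is `Σ_{(γ,δ) : (α,β)>(γ,δ)} w_{min(γ∖α)} = g(β) = w_1 β^1 + ⋯ + w_n β^n`; consequently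
every column of the local Markov matrix sums to zero: `Σ_{γ,δ} h^{γ,δ}_{α,β} = 0`. -/
theorem total_outgoing_rate (n : ℕ) (w : Fin n → ℝ) (hw : ∀ a, 0 < w a)
    (α β : Fin n → ℕ) :
    (∑' p : (Fin n → ℕ) × (Fin n → ℕ),
        wRateM w (toMul α) (toMul β) (toMul p.1) (toMul p.2)) = gVal w (toMul β) ∧
    gVal w (toMul β) = (∑ a : Fin n, w a * (β a : ℝ)) ∧
    (∑' p : (Fin n → ℕ) × (Fin n → ℕ), hEnt w α β p.1 p.2) = 0 := by
  classical
  set A := toMul α with hA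
  set B := toMul β with hB
  set l := B.sort (· ≤ ·) with hlDef
  set F : (Fin n → ℕ) × (Fin n → ℕ) → ℝ :=
    fun p => wRateM w A B (toMul p.1) (toMul p.2) with hF
  set e : Fin l.length → (Fin n → ℕ) × (Fin n → ℕ) :=
    fun k => (ofMul (A + ↑(l.drop k.val)), ofMul ↑(l.take k.val)) with he
  set S : Finset ((Fin n → ℕ) × (Fin n → ℕ)) := Finset.univ.image e with hS
  have hvan : ∀ p ∉ S, F p = 0 := by
    intro p hp
    rw [hF]
    by_cases h : GtRel A B (toMul p.1) (toMul p.2)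
    · exfalso
      obtain ⟨k, hk, hδ, hγ⟩ := (gtRel_iff' A B _ _).mp h
      apply hp
      rw [hS, Finset.mem_image]
      refine ⟨⟨k, hk⟩, Finset.mem_univ _, ?_⟩
      rw [he]
      have hq1 : p.1 = ofMul (A + (↑(l.drop k) : Multiset (Fin n))) := by
        rw [← hγ, ofMul_toMul']
      have hq2 : p.2 = ofMul (↑(l.take k) : Multiset (Fin n)) := by
        rw [← hδ, ofMul_toMul']
      exact Prod.ext hq1.symm hq2.symm
    · simp only [wRateM, dif_neg h]
  have hinj : ∀ x ∈ (Finset.univ : Finset (Fin l.length)), ∀ y ∈ Finset.univ,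
      e x = e y → x = y := by
    intro x _ y _ hxy
    have h2 : ofMul (↑(l.take x.val) : Multiset (Fin n)) = ofMul ↑(l.take y.val) :=
      congrArg Prod.snd hxy
    have h3 : (↑(l.take x.val) : Multiset (Fin n)) = ↑(l.take y.val) := by
      have := congrArg toMul h2
      rwa [toMul_ofMul', toMul_ofMul'] at this
    have h4 : (l.take x.val).length = (l.take y.val).length := by
      have := congrArg Multiset.card h3
      simpa using this
    rw [List.length_take, List.length_take] at h4
    have hx := x.isLt
    have hy := y.isLt
    apply Fin.ext
    omega
  have hmain : (∑' p : (Fin n → ℕ) × (Fin n → ℕ), F p) = gVal w B := by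
    rw [tsum_eq_sum hvan, hS, Finset.sum_image hinj]
    have hval : ∀ k : Fin l.length, F (e k) = w (l.get k) := by
      intro k
      rw [hF, he]
      simp only
      rw [toMul_ofMul', toMul_ofMul', wRateM_apply' w A B k.val k.isLt]
    rw [Finset.sum_congr rfl fun k _ => hval k]
    have : ∑ k : Fin l.length, w (l.get k) = (l.map w).sum := by
      conv_rhs => rw [← List.ofFn_get l]
      rw [List.map_ofFn, List.sum_ofFn]
      rfl
    rw [this, gVal, ← Multiset.sort_eq B (· ≤ ·), ← hlDef, Multiset.map_coe, Multiset.sum_coe]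
  have hg2 : gVal w B = ∑ a : Fin n, w a * (β a : ℝ) := by
    rw [gVal, hB, toMul]
    induction (Finset.univ : Finset (Fin n)) using Finset.induction with
    | empty => simp
    | insert _ _ h ih =>
      rw [Finset.sum_insert h, Finset.sum_insert h, Multiset.map_add, Multiset.sum_add, ih]
      simp [Multiset.map_replicate, Multiset.sum_replicate, mul_comm]
  refine ⟨hmain, hg2, ?_⟩
  have hsplit : ∀ p : (Fin n → ℕ) × (Fin n → ℕ),
      hEnt w α β p.1 p.2 = F p + (if p = (α, β) then -(gVal w B) else 0) := by
    intro p
    rw [hEnt, hEntM_split' w (toMul α) (toMul β) (toMul p.1) (toMul p.2), hF]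
    congr 1
    apply if_congr _ rfl rfl
    constructor
    · rintro ⟨hq1, hq2⟩
      exact Prod.ext (toMul_injective' hq1.symm) (toMul_injective' hq2.symm)
    · rintro rfl
      exact ⟨rfl, rfl⟩
  have hFsum : Summable F := summable_of_ne_finset_zero hvan
  have hIsum : Summable (fun p : (Fin n → ℕ) × (Fin n → ℕ) =>
      (if p = (α, β) then -(gVal w B) else 0)) := by
    apply summable_of_ne_finset_zero (s := {(α, β)})
    intro p hp
    rw [if_neg (by simpa using hp)]
  calc (∑' p : (Fin n → ℕ) × (Fin n → ℕ), hEnt w α β p.1 p.2)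
      = ∑' p : (Fin n → ℕ) × (Fin n → ℕ),
          (F p + (if p = (α, β) then -(gVal w B) else 0)) := tsum_congr hsplit
    _ = (∑' p, F p) + ∑' p : (Fin n → ℕ) × (Fin n → ℕ),
          (if p = (α, β) then -(gVal w B) else 0) := Summable.tsum_add hFsum hIsum
    _ = gVal w B + -(gVal w B) := by rw [hmain, tsum_ite_eq]
    _ = 0 := by ring


end ITAZRP
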